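/- Let $d, k \geq 1$ with a basis equal to the standard basis of $\mathbb{R}^d$. For every subset $I \subseteq [d]$, every index $i \in [d]$, and all finite non-empty sets $A_1, \dots, A_k \subseteq \mathbb{R}^d$, one has $|\pi_I(\mathcal{C}_i(A_1) + \dots + \mathcal{C}_i(A_k))| \leq |\pi_I(A_1 + \dots + A_k)|$. -/

import Mathlib

open scoped Pointwise

/-- The fiber of `A` over `u` in the direction `eᵢ`. -/
def fiberAt {d : ℕ} (i : Fin d) (A : Set (Fin d → ℝ)) (u : Fin d → ℝ) :
    Set (Fin d → ℝ) :=
  {a ∈ A | ∀ j, j ≠ i → a j = u j}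

/-- The compression `𝓒ᵢ(A)` of `A` onto the coordinate hyperplane `{x : xᵢ = 0}` with
respect to `eᵢ`: its fiber over each `u` with `uᵢ = 0` is `{u + n eᵢ : 0 ≤ n ≤ |A_u| - 1}`. -/
noncomputable def compressAt {d : ℕ} (i : Fin d) (A : Set (Fin d → ℝ)) :
    Set (Fin d → ℝ) :=
  {p | ∃ u : Fin d → ℝ, u i = 0 ∧ (∀ j, j ≠ i → p j = u j) ∧
    ∃ n : ℕ, n < (fiberAt i A u).ncard ∧ p i = n}

/-- The coordinate projection `π_I` applied to a set. -/
def projSet {d : ℕ} (I : Finset (Fin d)) (S : Set (Fin d → ℝ)) : Set (I → ℝ) :=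
  (fun x (j : I) => x j.1) '' S

/-! ### Auxiliary lemmas -/

/-- A finite sum of finite sets is finite. -/
lemma aux_sum_finite {ι α : Type*} [AddCommMonoid α] (s : Finset ι) (f : ι → Set α)
    (h : ∀ j ∈ s, (f j).Finite) : (∑ j ∈ s, f j).Finite := by
  classical
  induction s using Finset.cons_induction with
  | empty => simpa using Set.finite_singleton (0 : α)
  | cons a s ha ih =>
    rw [Finset.sum_cons]
    exact (h a (Finset.mem_cons_self a s)).add
      (ih fun j hj => h j (Finset.mem_cons_of_mem hj))

/-- A finite sum of nonempty sets is nonempty. -/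
lemma aux_sum_nonempty {ι α : Type*} [AddCommMonoid α] (s : Finset ι) (f : ι → Set α)
    (h : ∀ j ∈ s, (f j).Nonempty) : (∑ j ∈ s, f j).Nonempty := by
  classical
  induction s using Finset.cons_induction with
  | empty => exact ⟨0, rfl⟩
  | cons a s ha ih =>
    rw [Finset.sum_cons]
    exact (h a (Finset.mem_cons_self a s)).add
      (ih fun j hj => h j (Finset.mem_cons_of_mem hj))

/-- Binary Cauchy–Davenport in `ℝ`, for sets. -/
lemma aux_cd_two (s t : Set ℝ) (hs : s.Finite) (ht : t.Finite)
    (hs' : s.Nonempty) (ht' : t.Nonempty) :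
    s.ncard + t.ncard ≤ (s + t).ncard + 1 := by
  have hst : s + t = ↑(hs.toFinset + ht.toFinset) := by
    rw [Finset.coe_add, hs.coe_toFinset, ht.coe_toFinset]
  rw [hst, Set.ncard_coe_finset, Set.ncard_eq_toFinset_card s hs,
    Set.ncard_eq_toFinset_card t ht]
  have := cauchy_davenport_add_of_linearOrder_isCancelAdd
    (hs.toFinset_nonempty.mpr hs') (ht.toFinset_nonempty.mpr ht')
  have h1 : (hs.toFinset).Nonempty := hs.toFinset_nonempty.mpr hs'
  have := Finset.card_pos.mpr h1
  omega

/-- n-ary Cauchy–Davenport in `ℝ`, for sets. -/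
lemma aux_cd (ι : Type*) (s : Finset ι) (X : ι → Set ℝ)
    (hf : ∀ j ∈ s, (X j).Finite) (hn : ∀ j ∈ s, (X j).Nonempty) :
    ∑ j ∈ s, (X j).ncard + 1 ≤ (∑ j ∈ s, X j).ncard + s.card := by
  classical
  induction s using Finset.cons_induction with
  | empty =>
    simp only [Finset.sum_empty, Finset.card_empty, Finset.sum_empty]
    have : ((0 : Set ℝ)).ncard = 1 := by
      rw [show (0 : Set ℝ) = {0} from rfl, Set.ncard_singleton]
    omega
  | cons a s ha ih =>
    rw [Finset.sum_cons, Finset.sum_cons, Finset.card_cons]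
    have hfin : (∑ j ∈ s, X j).Finite :=
      aux_sum_finite s X fun j hj => hf j (Finset.mem_cons_of_mem hj)
    have hne : (∑ j ∈ s, X j).Nonempty :=
      aux_sum_nonempty s X fun j hj => hn j (Finset.mem_cons_of_mem hj)
    have h2 := aux_cd_two (X a) (∑ j ∈ s, X j) (hf a (Finset.mem_cons_self a s)) hfin
      (hn a (Finset.mem_cons_self a s)) hne
    have h3 := ih (fun j hj => hf j (Finset.mem_cons_of_mem hj))
      (fun j hj => hn j (Finset.mem_cons_of_mem hj))
    omega

/-- The `n`-th smallest element of a finite set of reals (junk value otherwise). -/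
noncomputable def nthS (s : Set ℝ) (n : ℕ) : ℝ :=
  if h : n < s.ncard then
    (Set.finite_of_ncard_ne_zero (Nat.ne_zero_of_lt h)).toFinset.orderEmbOfFin rfl
      ⟨n, lt_of_lt_of_eq h
        (Set.ncard_eq_toFinset_card s (Set.finite_of_ncard_ne_zero (Nat.ne_zero_of_lt h)))⟩
  else 0

lemma nthS_eq {s : Set ℝ} (hfin : s.Finite) {n : ℕ} (h : n < s.ncard) :
    nthS s n = hfin.toFinset.orderEmbOfFin rfl
      ⟨n, lt_of_lt_of_eq h (Set.ncard_eq_toFinset_card s hfin)⟩ := by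
  rw [nthS, dif_pos h]

lemma nthS_mem {s : Set ℝ} {n : ℕ} (h : n < s.ncard) : nthS s n ∈ s := by
  have hfin : s.Finite := Set.finite_of_ncard_ne_zero (Nat.ne_zero_of_lt h)
  rw [nthS_eq hfin h]
  have := Finset.orderEmbOfFin_mem hfin.toFinset rfl
    ⟨n, lt_of_lt_of_eq h (Set.ncard_eq_toFinset_card s hfin)⟩
  rwa [Set.Finite.mem_toFinset] at this

lemma nthS_inj {s : Set ℝ} {n m : ℕ} (hn : n < s.ncard) (hm : m < s.ncard)
    (he : nthS s n = nthS s m) : n = m := by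
  have hfin : s.Finite := Set.finite_of_ncard_ne_zero (Nat.ne_zero_of_lt hn)
  rw [nthS_eq hfin hn, nthS_eq hfin hm] at he
  have := (Finset.orderEmbOfFin hfin.toFinset rfl).injective he
  exact congrArg Fin.val this

/-- `|π_I(𝓒ᵢ(A₁) + ⋯ + 𝓒ᵢ(A_k))| ≤ |π_I(A₁ + ⋯ + A_k)|`. -/
theorem stmt_9 (d k : ℕ) (I : Finset (Fin d)) (i : Fin d)
    (A : Fin k → Set (Fin d → ℝ))
    (hfin : ∀ j, (A j).Finite) (hne : ∀ j, (A j).Nonempty) :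
    (projSet I (∑ j, compressAt i (A j))).ncard ≤ (projSet I (∑ j, A j)).ncard := by
  classical
  -- the projection as an additive monoid hom
  set π : (Fin d → ℝ) →+ (I → ℝ) :=
    { toFun := fun x (j : I) => x j.1, map_zero' := rfl, map_add' := fun _ _ => rfl } with hπ
  have hproj : ∀ S : Set (Fin d → ℝ), projSet I S = π '' S := fun _ => rfl
  have hTfin : (∑ j, A j).Finite := aux_sum_finite _ _ fun j _ => hfin j
  have hPTfin : (projSet I (∑ j, A j)).Finite := hTfin.image _
  by_cases hiI : i ∈ I
  · -- main case : `i ∈ I`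
    set i' : {x // x ∈ I} := ⟨i, hiI⟩ with hi'
    -- target fibers
    set Tf : (I → ℝ) → Set ℝ := fun y =>
      {t | ∃ w ∈ projSet I (∑ j, A j), w i' = t ∧ ∀ j : I, j ≠ i' → w j = y j} with hTf
    have hTffin : ∀ y, (Tf y).Finite := by
      intro y
      refine (hPTfin.image (fun w => w i')).subset ?_
      rintro t ⟨w, hw, rfl, -⟩
      exact ⟨w, hw, rfl⟩
    have hTfcongr : ∀ y y', (∀ j : I, j ≠ i' → y j = y' j) → Tf y = Tf y' := by
      intro y y' h
      ext t
      constructor <;> rintro ⟨w, hw, hwi, hwj⟩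
      · exact ⟨w, hw, hwi, fun j hj => (hwj j hj).trans (h j hj)⟩
      · exact ⟨w, hw, hwi, fun j hj => (hwj j hj).trans (h j hj).symm⟩
    -- key bound: every point of the projected compressed sum has `i`-coordinate a natural
    -- number smaller than the cardinality of the corresponding target fiber
    have key : ∀ y ∈ projSet I (∑ j, compressAt i (A j)),
        ∃ N : ℕ, y i' = N ∧ N < (Tf y).ncard := by
      rintro y ⟨x, hxS, rfl⟩
      rw [Set.mem_finset_sum] at hxS
      obtain ⟨p, hp, hsum⟩ := hxS
      have hp' : ∀ j, p j ∈ compressAt i (A j) := fun j => hp (Finset.mem_univ j)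
      choose u hu0 hpu n hn hpn using hp'
      refine ⟨∑ j, n j, ?_, ?_⟩
      · show x i = _
        rw [← hsum, Finset.sum_apply]
        simp only [hpn]
        exact (Nat.cast_sum _ _).symm
      · show ∑ j, n j < (Tf (π x)).ncard
        -- the set `C` of `i`-coordinates of sums of fiber elements
        set X : Fin k → Set ℝ := fun j => (fun a => a i) '' fiberAt i (A j) (u j) with hX
        have hfibfin : ∀ j, (fiberAt i (A j) (u j)).Finite :=
          fun j => (hfin j).subset fun a ha => ha.1
        have hfibne : ∀ j, (fiberAt i (A j) (u j)).Nonempty :=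
          fun j => Set.nonempty_of_ncard_ne_zero (by have := hn j; omega)
        have hXfin : ∀ j, (X j).Finite := fun j => (hfibfin j).image _
        have hXne : ∀ j, (X j).Nonempty := fun j => (hfibne j).image _
        have hXcard : ∀ j, (X j).ncard = (fiberAt i (A j) (u j)).ncard := by
          intro j
          refine Set.ncard_image_of_injOn ?_
          intro a ha b hb hab
          funext m
          by_cases hm : m = i
          · rwa [hm]
          · rw [ha.2 m hm, hb.2 m hm]
        -- the sum of the `X j` sits inside the target fiber
        have hsub : (∑ j, X j) ⊆ Tf (π x) := by
          intro t ht
          rw [Set.mem_finset_sum] at ht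
          obtain ⟨g, hg, hgt⟩ := ht
          have hg' : ∀ j, g j ∈ X j := fun j => hg (Finset.mem_univ j)
          choose a ha hai using hg'
          refine ⟨π (∑ j, a j), ⟨∑ j, a j, ?_, rfl⟩, ?_, ?_⟩
          · exact Set.finset_sum_mem_finset_sum _ _ _ fun j _ => (ha j).1
          · show (∑ j, a j) i = t
            rw [Finset.sum_apply]
            rw [← hgt]
            exact Finset.sum_congr rfl fun j _ => hai j
          · intro j' hj'
            have hj'1 : (j' : Fin d) ≠ i := fun h => hj' (Subtype.ext h)
            show (∑ j, a j) j'.1 = x j'.1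
            rw [Finset.sum_apply, ← hsum, Finset.sum_apply]
            refine Finset.sum_congr rfl fun j _ => ?_
            rw [(ha j).2 j'.1 hj'1, ← hpu j j'.1 hj'1]
        -- Cauchy–Davenport gives the cardinality bound
        have hcd := aux_cd (Fin k) Finset.univ X (fun j _ => hXfin j) (fun j _ => hXne j)
        have hsumcard : ∑ j, n j + k ≤ ∑ j, (X j).ncard := by
          have h1 : ∀ j, n j + 1 ≤ (X j).ncard := fun j => by rw [hXcard j]; exact hn j
          calc ∑ j, n j + k = ∑ j : Fin k, (n j + 1) := by
                rw [Finset.sum_add_distrib, Finset.sum_const, Finset.card_univ,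
                  Fintype.card_fin, smul_eq_mul, mul_one]
          _ ≤ _ := Finset.sum_le_sum fun j _ => h1 j
        have hfibT : (∑ j, X j).ncard ≤ (Tf (π x)).ncard :=
          Set.ncard_le_ncard hsub (hTffin _)
        have hk : (Finset.univ : Finset (Fin k)).card = k := by simp
        omega
    -- the injection
    refine Set.ncard_le_ncard_of_injOn
      (fun y => Function.update y i' (nthS (Tf y) ⌊y i'⌋₊)) ?_ ?_ hPTfin
    · intro y hy
      obtain ⟨N, hyN, hNlt⟩ := key y hy
      have hfl : ⌊y i'⌋₊ = N := by rw [hyN, Nat.floor_natCast]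
      obtain ⟨w, hw, hwi, hwj⟩ := nthS_mem (hfl ▸ hNlt : ⌊y i'⌋₊ < (Tf y).ncard)
      have hFy : Function.update y i' (nthS (Tf y) ⌊y i'⌋₊) = w := by
        funext j
        by_cases hj : j = i'
        · subst hj; rw [Function.update_self]; exact hwi.symm
        · rw [Function.update_of_ne hj]; exact (hwj j hj).symm
      show Function.update y i' (nthS (Tf y) ⌊y i'⌋₊) ∈ projSet I (∑ j, A j)
      rw [hFy]; exact hw
    · intro y hy y' hy' hFe
      obtain ⟨N, hyN, hNlt⟩ := key y hy
      obtain ⟨N', hyN', hNlt'⟩ := key y' hy'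
      have hfl : ⌊y i'⌋₊ = N := by rw [hyN, Nat.floor_natCast]
      have hfl' : ⌊y' i'⌋₊ = N' := by rw [hyN', Nat.floor_natCast]
      have hFe' : Function.update y i' (nthS (Tf y) ⌊y i'⌋₊)
          = Function.update y' i' (nthS (Tf y') ⌊y' i'⌋₊) := hFe
      have hoff : ∀ j : I, j ≠ i' → y j = y' j := by
        intro j hj
        have := congrFun hFe' j
        rwa [Function.update_of_ne hj, Function.update_of_ne hj] at this
      have hTfe : Tf y = Tf y' := hTfcongr y y' hoff
      have hii : nthS (Tf y) N = nthS (Tf y) N' := by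
        have := congrFun hFe' i'
        rw [Function.update_self, Function.update_self] at this
        rwa [hfl, hfl', ← hTfe] at this
      have hNN : N = N' := nthS_inj hNlt (hTfe ▸ hNlt') hii
      funext j
      by_cases hj : j = i'
      · rw [hj, hyN, hyN', hNN]
      · exact hoff j hj
  · -- easy case : `i ∉ I`, the two projections are equal
    have hCA : ∀ j, π '' compressAt i (A j) = π '' A j := by
      intro j
      apply Set.Subset.antisymm
      · rintro y ⟨p, ⟨u, hu0, hpu, m, hm, hpm⟩, rfl⟩
        obtain ⟨a, haA, hau⟩ : (fiberAt i (A j) u).Nonempty :=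
          Set.nonempty_of_ncard_ne_zero (by omega)
        refine ⟨a, haA, ?_⟩
        funext j'
        have : (j' : Fin d) ≠ i := fun h => hiI (h ▸ j'.2)
        show a j'.1 = p j'.1
        rw [hau j'.1 this, ← hpu j'.1 this]
      · rintro y ⟨a, haA, rfl⟩
        refine ⟨Function.update a i 0, ⟨Function.update a i 0, Function.update_self .., fun _ _ => rfl, 0, ?_, ?_⟩, ?_⟩
        · have hmem : a ∈ fiberAt i (A j) (Function.update a i 0) :=
            ⟨haA, fun m hm => (Function.update_of_ne hm 0 a).symm⟩
          have hfinf : (fiberAt i (A j) (Function.update a i 0)).Finite :=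
            (hfin j).subset fun b hb => hb.1
          have := (Set.ncard_pos hfinf).mpr ⟨a, hmem⟩
          omega
        · simp [Function.update_self]
        · funext j'
          have : (j' : Fin d) ≠ i := fun h => hiI (h ▸ j'.2)
          show Function.update a i 0 j'.1 = a j'.1
          rw [Function.update_of_ne this]
    have : projSet I (∑ j, compressAt i (A j)) = projSet I (∑ j, A j) := by
      rw [hproj, hproj, Set.image_finset_sum π, Set.image_finset_sum π]
      exact Finset.sum_congr rfl fun j _ => hCA j
    rw [this]
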